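/- Let A ∈ ℝ^{d×d} be invertible and let ε satisfy 0 < ε < λ_min(AᵀA), the smallest eigenvalue of the symmetric positive definite matrix AᵀA. Define G_ε = −(εI + AᵀA)⁻¹ Aᵀ. Then the matrix ½I + G_εA is symmetric and negative definite; in particular every eigenvalue of ½I + G_εA is real and strictly negative, so ½I + G_εA is Hurwitz. -/

import Mathlib

open Matrix

/-- `Aᵀ A` is Hermitian (over `ℝ`: symmetric). -/
theorem transpose_mul_self_isHermitian (d : ℕ) (A : Matrix (Fin d) (Fin d) ℝ) :
    (Aᵀ * A).IsHermitian := by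
  simpa [Matrix.conjTranspose_eq_transpose_of_trivial] using
    Matrix.isHermitian_conjTranspose_mul_self A
/-- Conjugation identity for unitary-like `V`. -/
lemma conj_mul_conj_aux {d : ℕ} (V P Q : Matrix (Fin d) (Fin d) ℝ)
    (h : star V * V = 1) :
    (V * P * star V) * (V * Q * star V) = V * (P * Q) * star V := by
  calc (V * P * star V) * (V * Q * star V)
      = V * P * (star V * V) * Q * star V := by
        simp only [Matrix.mul_assoc]
    _ = V * (P * Q) * star V := by rw [h]; simp only [Matrix.mul_one, Matrix.mul_assoc]

lemma conj_add_conj_aux {d : ℕ} (V P Q : Matrix (Fin d) (Fin d) ℝ) :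
    (V * P * star V) + (V * Q * star V) = V * (P + Q) * star V := by
  rw [Matrix.mul_add, Matrix.add_mul]

lemma posdef_conj_aux {d : ℕ} {N V : Matrix (Fin d) (Fin d) ℝ}
    (hN : N.PosDef) (h1 : V * star V = 1) :
    (V * N * star V).PosDef := by
  apply Matrix.PosDef.of_dotProduct_mulVec_pos
  · show (V * N * star V)ᴴ = _
    calc (V * N * star V)ᴴ = (star V)ᴴ * (Nᴴ * Vᴴ) := by
          simp [Matrix.conjTranspose_mul, Matrix.mul_assoc]
      _ = V * N * star V := by
          rw [hN.1.eq]
          simp [Matrix.star_eq_conjTranspose, Matrix.mul_assoc]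
  · intro x hx
    set y := star V *ᵥ x with hy_def
    have hxy : V *ᵥ y = x := by
      rw [hy_def, Matrix.mulVec_mulVec, h1, Matrix.one_mulVec]
    have hy : y ≠ 0 := by
      intro h
      rw [h, Matrix.mulVec_zero] at hxy
      exact hx hxy.symm
    have hpos := hN.dotProduct_mulVec_pos hy
    have key : dotProduct (star x) ((V * N * star V) *ᵥ x)
        = dotProduct (star y) (N *ᵥ y) := by
      rw [hy_def, Matrix.star_mulVec, ← Matrix.mulVec_mulVec, ← Matrix.mulVec_mulVec,
        Matrix.dotProduct_mulVec (star x)]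
      congr 1
    rw [key]
    exact hpos

theorem stmt_15 (d : ℕ) (A : Matrix (Fin d) (Fin d) ℝ) (hA : IsUnit A)
    (ε : ℝ) (hε : 0 < ε)
    (hεlt : ∀ i : Fin d, ε < (transpose_mul_self_isHermitian d A).eigenvalues i) :
    ((2 : ℝ)⁻¹ • (1 : Matrix (Fin d) (Fin d) ℝ)
        + (-((ε • (1 : Matrix (Fin d) (Fin d) ℝ) + Aᵀ * A)⁻¹ * Aᵀ)) * A)ᵀ
      = (2 : ℝ)⁻¹ • (1 : Matrix (Fin d) (Fin d) ℝ)
        + (-((ε • (1 : Matrix (Fin d) (Fin d) ℝ) + Aᵀ * A)⁻¹ * Aᵀ)) * A ∧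
    (-((2 : ℝ)⁻¹ • (1 : Matrix (Fin d) (Fin d) ℝ)
        + (-((ε • (1 : Matrix (Fin d) (Fin d) ℝ) + Aᵀ * A)⁻¹ * Aᵀ)) * A)).PosDef ∧
    (∀ μ : ℂ, μ ∈ spectrum ℂ
        ((((2 : ℝ)⁻¹ • (1 : Matrix (Fin d) (Fin d) ℝ)
          + (-((ε • (1 : Matrix (Fin d) (Fin d) ℝ) + Aᵀ * A)⁻¹ * Aᵀ)) * A)).map
          (algebraMap ℝ ℂ)) →
      μ.im = 0 ∧ μ.re < 0) := by
  have hS := transpose_mul_self_isHermitian d A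
  set V : Matrix (Fin d) (Fin d) ℝ := (hS.eigenvectorUnitary : Matrix (Fin d) (Fin d) ℝ)
    with hV_def
  set lam : Fin d → ℝ := hS.eigenvalues with hlam_def
  have hV1 : V * star V = 1 := (Matrix.mem_unitaryGroup_iff).mp hS.eigenvectorUnitary.2
  have hV2 : star V * V = 1 := (Matrix.mem_unitaryGroup_iff').mp hS.eigenvectorUnitary.2
  have hspec : Aᵀ * A = V * Matrix.diagonal lam * star V := by
    have := hS.spectral_theorem
    rwa [RCLike.ofReal_real_eq_id, Function.id_comp] at this
  have hpos : ∀ i, 0 < ε + lam i := fun i => by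
    have := hεlt i; linarith
  -- constant multiples as conjugations
  have hconst : ∀ c : ℝ, c • (1 : Matrix (Fin d) (Fin d) ℝ)
      = V * Matrix.diagonal (fun _ => c) * star V := by
    intro c
    have : Matrix.diagonal (fun _ : Fin d => c) = c • (1 : Matrix (Fin d) (Fin d) ℝ) := by
      ext i j
      by_cases h : i = j <;> simp [Matrix.diagonal_apply, h]
    rw [this, Matrix.mul_smul, Matrix.smul_mul, Matrix.mul_one, hV1]
  have hB : ε • (1 : Matrix (Fin d) (Fin d) ℝ) + Aᵀ * A
      = V * Matrix.diagonal (fun i => ε + lam i) * star V := by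
    rw [hspec, hconst ε, conj_add_conj_aux, Matrix.diagonal_add]
  have hBinv : (ε • (1 : Matrix (Fin d) (Fin d) ℝ) + Aᵀ * A)⁻¹
      = V * Matrix.diagonal (fun i => (ε + lam i)⁻¹) * star V := by
    apply Matrix.inv_eq_right_inv
    rw [hB, conj_mul_conj_aux _ _ _ hV2, Matrix.diagonal_mul_diagonal]
    have : (fun i => (ε + lam i) * (ε + lam i)⁻¹) = fun _ : Fin d => (1 : ℝ) := by
      funext i
      exact mul_inv_cancel₀ (hpos i).ne'
    rw [this, Matrix.diagonal_one, Matrix.mul_one, hV1]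
  have hdneg : ∀ h : Fin d → ℝ, -(V * Matrix.diagonal h * star V)
      = V * Matrix.diagonal (fun i => -(h i)) * star V := by
    intro h
    rw [← Matrix.diagonal_neg, Matrix.mul_neg, Matrix.neg_mul]
  set f : Fin d → ℝ := fun i => 2⁻¹ + -((ε + lam i)⁻¹ * lam i) with hf_def
  have hM : (2 : ℝ)⁻¹ • (1 : Matrix (Fin d) (Fin d) ℝ)
        + (-((ε • (1 : Matrix (Fin d) (Fin d) ℝ) + Aᵀ * A)⁻¹ * Aᵀ)) * A
      = V * Matrix.diagonal f * star V := by
    rw [Matrix.neg_mul, Matrix.mul_assoc, hBinv, hspec,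
      conj_mul_conj_aux _ _ _ hV2, Matrix.diagonal_mul_diagonal, hconst 2⁻¹]
    rw [hdneg]
    rw [conj_add_conj_aux, Matrix.diagonal_add]
  have hfneg : ∀ i, f i < 0 := by
    intro i
    have h1 : (2 : ℝ)⁻¹ < (ε + lam i)⁻¹ * lam i := by
      rw [inv_mul_eq_div, lt_div_iff₀ (hpos i)]
      have := hεlt i
      linarith
    simp only [hf_def]
    linarith
  refine ⟨?_, ?_, ?_⟩
  · rw [hM]
    have hstar : star V = Vᵀ := by
      rw [Matrix.star_eq_conjTranspose, Matrix.conjTranspose_eq_transpose_of_trivial]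
    rw [hstar]
    rw [Matrix.transpose_mul, Matrix.transpose_mul, Matrix.transpose_transpose,
      Matrix.diagonal_transpose, Matrix.mul_assoc]
  · rw [hM]
    rw [hdneg]
    apply posdef_conj_aux _ hV1
    rw [Matrix.posDef_diagonal_iff]
    intro i
    have := hfneg i
    linarith
  · intro μ hμ
    rw [hM] at hμ
    set g : ℝ →+* ℂ := algebraMap ℝ ℂ with hg_def
    have hmap : (V * Matrix.diagonal f * star V).map g
        = (V.map g) * Matrix.diagonal (fun i => g (f i)) * ((star V).map g) := by
      rw [Matrix.map_mul, Matrix.map_mul, Matrix.diagonal_map (map_zero g)]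
    have hu1 : (V.map g) * ((star V).map g) = 1 := by
      rw [← Matrix.map_mul, hV1, Matrix.map_one g (map_zero g) (map_one g)]
    have hu2 : ((star V).map g) * (V.map g) = 1 := by
      rw [← Matrix.map_mul, hV2, Matrix.map_one g (map_zero g) (map_one g)]
    set u : (Matrix (Fin d) (Fin d) ℂ)ˣ := ⟨V.map g, (star V).map g, hu1, hu2⟩ with hu_def
    have hspec2 : spectrum ℂ ((V * Matrix.diagonal f * star V).map g)
        = spectrum ℂ (Matrix.diagonal (fun i => g (f i))) := by
      rw [hmap]
      exact spectrum.units_conjugate (u := u)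
    rw [hspec2, spectrum_diagonal] at hμ
    obtain ⟨i, hi⟩ := hμ
    have : μ = Complex.ofReal (f i) := hi.symm
    subst this
    constructor
    · simp
    · simp only [Complex.ofReal_re]
      exact hfneg i
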